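/- Let d ≥ 1, α ∈ (0,2), c₀ > 0, and suppose ν is a Borel measure on ℝ^d with ν(dz) ≤ c₀ |z|^{-(d+α)} dz. Let Λ ≥ 1 and let Ψ : ℝ^d → ℝ^d satisfy |Ψ(z)| ≥ (2Λ)^{-1} κ whenever |z| ≤ (2Λ³)^{-1} κ, for some κ > 0. Then there is a constant c₁ > 0 depending only on d, α, c₀, Λ such that (ν ∧ (νΨ))(ℝ^d) ≤ c₁ κ^{-α}, where (νΨ)(A) = ν(Ψ(A)). -/

import Mathlib

open MeasureTheory Set
open scoped ENNReal NNReal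

lemma stmt9_aux (d : ℕ) (hd : 1 ≤ d) (α c₀ : ℝ) (hα : 0 < α) (hc₀ : 0 < c₀) :
    ∃ C > (0 : ℝ), ∀ r : ℝ, 0 < r →
      (volume.withDensity fun z : EuclideanSpace ℝ (Fin d) =>
          ENNReal.ofReal (c₀ * ‖z‖ ^ (-((d : ℝ) + α)))) {z | r ≤ ‖z‖}
        ≤ ENNReal.ofReal (C * r ^ (-α)) := by
  set s : ℝ := (d : ℝ) + α with hs
  have hspos : 0 < s := by positivity
  set f : EuclideanSpace ℝ (Fin d) → ℝ≥0∞ :=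
    fun z => ENNReal.ofReal (c₀ * ‖z‖ ^ (-s)) with hf
  have hfm : Measurable f := by
    apply ENNReal.measurable_ofReal.comp
    fun_prop
  have hSm : ∀ r : ℝ, MeasurableSet {z : EuclideanSpace ℝ (Fin d) | r ≤ ‖z‖} :=
    fun r => measurableSet_le measurable_const measurable_norm
  set I1 : ℝ≥0∞ := ∫⁻ z in {z : EuclideanSpace ℝ (Fin d) | 1 ≤ ‖z‖}, f z with hI1
  -- finiteness of I1
  have hI1fin : I1 < ⊤ := by
    have hbound : ∀ z ∈ {z : EuclideanSpace ℝ (Fin d) | 1 ≤ ‖z‖},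
        f z ≤ ENNReal.ofReal (c₀ * 2 ^ s) * ENNReal.ofReal ((1 + ‖z‖) ^ (-s)) := by
      intro z hz
      rw [← ENNReal.ofReal_mul (by positivity)]
      apply ENNReal.ofReal_le_ofReal
      have h1 : (0:ℝ) < ‖z‖ := lt_of_lt_of_le one_pos hz
      have h2 : (1 + ‖z‖) ≤ 2 * ‖z‖ := by
        have : (1:ℝ) ≤ ‖z‖ := hz
        linarith
      have h3 : (2 * ‖z‖) ^ (-s) ≤ (1 + ‖z‖) ^ (-s) :=
        Real.rpow_le_rpow_of_nonpos (by positivity) h2 (by linarith)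
      have h4 : (2 * ‖z‖) ^ (-s) = 2 ^ (-s) * ‖z‖ ^ (-s) :=
        Real.mul_rpow (by norm_num) (norm_nonneg z)
      have h5 : ‖z‖ ^ (-s) ≤ 2 ^ s * (1 + ‖z‖) ^ (-s) := by
        rw [h4] at h3
        have h6 : (0:ℝ) < 2 ^ (-s) := by positivity
        have h7 := (le_div_iff₀' h6).mpr h3
        rwa [div_eq_mul_inv, ← Real.rpow_neg (by norm_num), neg_neg, mul_comm] at h7
      calc c₀ * ‖z‖ ^ (-s) ≤ c₀ * (2 ^ s * (1 + ‖z‖) ^ (-s)) :=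
            mul_le_mul_of_nonneg_left h5 hc₀.le
        _ = c₀ * 2 ^ s * (1 + ‖z‖) ^ (-s) := by ring
    calc I1 ≤ ∫⁻ z in {z : EuclideanSpace ℝ (Fin d) | 1 ≤ ‖z‖},
          ENNReal.ofReal (c₀ * 2 ^ s) * ENNReal.ofReal ((1 + ‖z‖) ^ (-s)) :=
        setLIntegral_mono' (hSm 1) hbound
      _ ≤ ∫⁻ z : EuclideanSpace ℝ (Fin d),
          ENNReal.ofReal (c₀ * 2 ^ s) * ENNReal.ofReal ((1 + ‖z‖) ^ (-s)) :=
        setLIntegral_le_lintegral _ _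
      _ = ENNReal.ofReal (c₀ * 2 ^ s) * ∫⁻ z : EuclideanSpace ℝ (Fin d),
          ENNReal.ofReal ((1 + ‖z‖) ^ (-s)) := by
        rw [lintegral_const_mul]
        apply ENNReal.measurable_ofReal.comp
        fun_prop
      _ < ⊤ := by
        apply ENNReal.mul_lt_top ENNReal.ofReal_lt_top
        apply finite_integral_one_add_norm
        rw [finrank_euclideanSpace_fin]
        simp only [hs]
        linarith
  -- scaling identity
  have hscale : ∀ r : ℝ, 0 < r →
      (∫⁻ z in {z : EuclideanSpace ℝ (Fin d) | r ≤ ‖z‖}, f z)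
        = ENNReal.ofReal (r ^ (-α)) * I1 := by
    intro r hr
    set g : EuclideanSpace ℝ (Fin d) → ℝ≥0∞ :=
      {z : EuclideanSpace ℝ (Fin d) | r ≤ ‖z‖}.indicator f with hg
    have hgm : Measurable g := hfm.indicator (hSm r)
    have hmap := MeasureTheory.Measure.map_addHaar_smul
      (volume : Measure (EuclideanSpace ℝ (Fin d))) (ne_of_gt hr)
    have key : ENNReal.ofReal |(r ^ Module.finrank ℝ (EuclideanSpace ℝ (Fin d)))⁻¹|
        * ∫⁻ z, g z = ∫⁻ z, g (r • z) := by
      rw [← smul_eq_mul, ← lintegral_smul_measure, ← hmap,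
        lintegral_map hgm (measurable_const_smul r)]
    have hcomp : ∀ z : EuclideanSpace ℝ (Fin d),
        g (r • z) = ENNReal.ofReal (r ^ (-s)) *
          ({z : EuclideanSpace ℝ (Fin d) | 1 ≤ ‖z‖}.indicator f z) := by
      intro z
      have hnorm : ‖r • z‖ = r * ‖z‖ := by
        rw [norm_smul, Real.norm_eq_abs, abs_of_pos hr]
      by_cases hz : z ∈ {z : EuclideanSpace ℝ (Fin d) | 1 ≤ ‖z‖}
      · have hz' : (1:ℝ) ≤ ‖z‖ := hz
        have hmem : r • z ∈ {z : EuclideanSpace ℝ (Fin d) | r ≤ ‖z‖} := by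
          simp only [Set.mem_setOf_eq, hnorm]
          exact le_mul_of_one_le_right hr.le hz'
        rw [hg, Set.indicator_of_mem hmem, Set.indicator_of_mem hz, hf]
        simp only [hnorm]
        rw [Real.mul_rpow hr.le (norm_nonneg z),
          ← ENNReal.ofReal_mul (by positivity : (0:ℝ) ≤ r ^ (-s))]
        congr 1
        ring
      · have hz' : ‖z‖ < 1 := by
          simpa only [Set.mem_setOf_eq, not_le] using hz
        have hmem : r • z ∉ {z : EuclideanSpace ℝ (Fin d) | r ≤ ‖z‖} := by
          simp only [Set.mem_setOf_eq, hnorm, not_le]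
          calc r * ‖z‖ < r * 1 := mul_lt_mul_of_pos_left hz' hr
            _ = r := mul_one r
        rw [hg, Set.indicator_of_notMem hmem, Set.indicator_of_notMem hz, mul_zero]
    have key2 : ENNReal.ofReal |(r ^ Module.finrank ℝ (EuclideanSpace ℝ (Fin d)))⁻¹|
        * ∫⁻ z, g z = ENNReal.ofReal (r ^ (-s)) * I1 := by
      rw [key]
      simp only [hcomp]
      rw [lintegral_const_mul _ (hfm.indicator (hSm 1)), lintegral_indicator (hSm 1)]
    have hrd : (0:ℝ) < r ^ Module.finrank ℝ (EuclideanSpace ℝ (Fin d)) := by positivity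
    have hinv : ENNReal.ofReal (r ^ Module.finrank ℝ (EuclideanSpace ℝ (Fin d)))
        * ENNReal.ofReal |(r ^ Module.finrank ℝ (EuclideanSpace ℝ (Fin d)))⁻¹| = 1 := by
      rw [abs_of_pos (by positivity), ← ENNReal.ofReal_mul hrd.le,
        mul_inv_cancel₀ (ne_of_gt hrd), ENNReal.ofReal_one]
    have hgint : ∫⁻ z, g z = ∫⁻ z in {z : EuclideanSpace ℝ (Fin d) | r ≤ ‖z‖}, f z := by
      rw [hg, lintegral_indicator (hSm r)]
    calc (∫⁻ z in {z : EuclideanSpace ℝ (Fin d) | r ≤ ‖z‖}, f z)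
        = 1 * ∫⁻ z, g z := by rw [one_mul, hgint]
      _ = ENNReal.ofReal (r ^ Module.finrank ℝ (EuclideanSpace ℝ (Fin d)))
          * (ENNReal.ofReal |(r ^ Module.finrank ℝ (EuclideanSpace ℝ (Fin d)))⁻¹|
            * ∫⁻ z, g z) := by rw [← mul_assoc, hinv]
      _ = ENNReal.ofReal (r ^ Module.finrank ℝ (EuclideanSpace ℝ (Fin d)))
          * (ENNReal.ofReal (r ^ (-s)) * I1) := by rw [key2]
      _ = ENNReal.ofReal (r ^ (-α)) * I1 := by
        rw [← mul_assoc, ← ENNReal.ofReal_mul (by positivity), finrank_euclideanSpace_fin,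
          ← Real.rpow_natCast r d, ← Real.rpow_add hr]
        congr 2
        rw [hs]
        ring
  refine ⟨I1.toReal + 1, by positivity, fun r hr => ?_⟩
  rw [withDensity_apply _ (hSm r), hscale r hr]
  rw [ENNReal.ofReal_mul (by positivity : (0:ℝ) ≤ I1.toReal + 1), mul_comm]
  apply mul_le_mul_left
  calc I1 = ENNReal.ofReal I1.toReal := by rw [ENNReal.ofReal_toReal (ne_of_lt hI1fin)]
    _ ≤ ENNReal.ofReal (I1.toReal + 1) := ENNReal.ofReal_le_ofReal (by linarith)

/-- If `ν(dz) ≤ c₀|z|^{-(d+α)} dz`, `Λ ≥ 1`, and `|Ψ(z)| ≥ (2Λ)⁻¹κ`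
whenever `|z| ≤ (2Λ³)⁻¹κ`, then `(ν ∧ (νΨ))(ℝ^d) ≤ c₁ κ^{-α}` for a constant
`c₁ > 0` depending only on `d, α, c₀, Λ`; here `(νΨ)(A) = ν(Ψ(A))` is realised as
`Measure.comap Ψ ν` (with `Ψ` injective mapping measurable sets to measurable sets). -/
theorem stmt9 (d : ℕ) (hd : 1 ≤ d) (α c₀ Λ : ℝ)
    (hα : 0 < α) (hα2 : α < 2) (hc₀ : 0 < c₀) (hΛ : 1 ≤ Λ) :
    ∃ c₁ > (0 : ℝ), ∀ (ν : Measure (EuclideanSpace ℝ (Fin d)))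
      (Ψ : EuclideanSpace ℝ (Fin d) → EuclideanSpace ℝ (Fin d)) (κ : ℝ), 0 < κ →
      (ν ≤ volume.withDensity fun z => ENNReal.ofReal (c₀ * ‖z‖ ^ (-((d : ℝ) + α)))) →
      Function.Injective Ψ →
      (∀ s : Set (EuclideanSpace ℝ (Fin d)), MeasurableSet s → MeasurableSet (Ψ '' s)) →
      (∀ z : EuclideanSpace ℝ (Fin d), ‖z‖ ≤ (2 * Λ ^ 3)⁻¹ * κ → (2 * Λ)⁻¹ * κ ≤ ‖Ψ z‖) →
      (ν ⊓ Measure.comap Ψ ν) Set.univ ≤ ENNReal.ofReal (c₁ * κ ^ (-α)) := by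
  obtain ⟨C, hC, hCbound⟩ := stmt9_aux d hd α c₀ hα hc₀
  have hΛ0 : (0:ℝ) < Λ := lt_of_lt_of_le one_pos hΛ
  refine ⟨C * ((2 * Λ ^ 3) ^ α + (2 * Λ) ^ α), by positivity, ?_⟩
  intro ν Ψ κ hκ hν hinj hmeas hΨ
  set μ := volume.withDensity
    fun z : EuclideanSpace ℝ (Fin d) => ENNReal.ofReal (c₀ * ‖z‖ ^ (-((d : ℝ) + α)))
  set r : ℝ := (2 * Λ ^ 3)⁻¹ * κ with hrdef
  have hr : 0 < r := by positivity
  set B : Set (EuclideanSpace ℝ (Fin d)) := Metric.closedBall 0 r with hB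
  have hBm : MeasurableSet B := measurableSet_closedBall
  -- bound on the complement
  have hν' : ∀ t : Set (EuclideanSpace ℝ (Fin d)), ν t ≤ μ t :=
    fun t => Measure.le_iff'.mp hν t
  have hgen : ∀ ρ : ℝ, 0 < ρ → ∀ t : Set (EuclideanSpace ℝ (Fin d)),
      (∀ z ∈ t, ρ ≤ ‖z‖) → ν t ≤ ENNReal.ofReal (C * ρ ^ (-α)) := by
    intro ρ hρ t ht
    calc ν t ≤ ν {z | ρ ≤ ‖z‖} := measure_mono ht
      _ ≤ μ {z | ρ ≤ ‖z‖} := hν' _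
      _ ≤ ENNReal.ofReal (C * ρ ^ (-α)) := hCbound ρ hρ
  have h1 : ν Bᶜ ≤ ENNReal.ofReal (C * r ^ (-α)) := by
    apply hgen r hr
    intro z hz
    have : ¬ z ∈ B := hz
    rw [hB, Metric.mem_closedBall, dist_zero_right, not_le] at this
    exact this.le
  have h2 : Measure.comap Ψ ν B ≤ ENNReal.ofReal (C * ((2 * Λ)⁻¹ * κ) ^ (-α)) := by
    rw [Measure.comap_apply Ψ hinj hmeas ν hBm]
    apply hgen ((2 * Λ)⁻¹ * κ) (by positivity)
    rintro w ⟨z, hz, rfl⟩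
    apply hΨ
    rw [hB, Metric.mem_closedBall, dist_zero_right] at hz
    exact hz
  have hinfl : (ν ⊓ Measure.comap Ψ ν) ≤ ν := inf_le_left
  have hinfr : (ν ⊓ Measure.comap Ψ ν) ≤ Measure.comap Ψ ν := inf_le_right
  have hsplit : (ν ⊓ Measure.comap Ψ ν) Set.univ ≤
      (ν ⊓ Measure.comap Ψ ν) B + (ν ⊓ Measure.comap Ψ ν) Bᶜ := by
    rw [← Set.union_compl_self B]
    exact measure_union_le B Bᶜ
  have hfinal : (ν ⊓ Measure.comap Ψ ν) Set.univ ≤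
      ENNReal.ofReal (C * ((2 * Λ)⁻¹ * κ) ^ (-α)) + ENNReal.ofReal (C * r ^ (-α)) := by
    refine hsplit.trans (add_le_add ?_ ?_)
    · exact (Measure.le_iff'.mp hinfr B).trans h2
    · exact (Measure.le_iff'.mp hinfl Bᶜ).trans h1
  refine hfinal.trans ?_
  rw [← ENNReal.ofReal_add (by positivity) (by positivity)]
  apply ENNReal.ofReal_le_ofReal
  have ha : ((2 * Λ)⁻¹ * κ) ^ (-α) = (2 * Λ) ^ α * κ ^ (-α) := by
    rw [Real.mul_rpow (by positivity) hκ.le, ← Real.rpow_neg_one (2 * Λ),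
      ← Real.rpow_mul (by positivity), neg_one_mul, neg_neg]
  have hb : r ^ (-α) = (2 * Λ ^ 3) ^ α * κ ^ (-α) := by
    rw [hrdef, Real.mul_rpow (by positivity) hκ.le, ← Real.rpow_neg_one (2 * Λ ^ 3),
      ← Real.rpow_mul (by positivity), neg_one_mul, neg_neg]
  rw [ha, hb]
  have hκα : (0:ℝ) ≤ κ ^ (-α) := by positivity
  nlinarith [Real.rpow_nonneg (by positivity : (0:ℝ) ≤ 2 * Λ) α,
    Real.rpow_nonneg (by positivity : (0:ℝ) ≤ 2 * Λ ^ 3) α, hC.le, hκα]
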